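/- A function f : (ZMod 2)^n → ZMod 2 has a non-zero b-shift s if and only if there is an (n−1)-dimensional subspace S of (ZMod 2)^n such that F̂(w) = 0 for all w outside the coset S + b·r (r any fixed vector outside S), equivalently F̂(w) = 0 whenever w·s ≠ b. -/

import Mathlib

noncomputable def fourierC (n : ℕ) (f : (Fin n → ZMod 2) → ZMod 2) (w : Fin n → ZMod 2) : ℝ :=
  (1 / 2 ^ n : ℝ) * ∑ x : Fin n → ZMod 2, (-1 : ℝ) ^ (((∑ i, w i * x i) + f x).val)

noncomputable def chiZ (a : ZMod 2) : ℝ := (-1 : ℝ) ^ a.val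

lemma val2 : (2 : ZMod 2).val = 0 := by decide
lemma val1 : (1 : ZMod 2).val = 1 := by decide
lemma val0 : (0 : ZMod 2).val = 0 := by decide

lemma chiZ_add (a b : ZMod 2) : chiZ (a + b) = chiZ a * chiZ b := by
  unfold chiZ
  rw [ZMod.val_add, ← pow_add]
  rcases Nat.even_or_odd (a.val + b.val) with h | h
  · rw [Nat.even_iff] at h
    rw [h, pow_zero, Even.neg_one_pow (Nat.even_iff.mpr h)]
  · rw [Nat.odd_iff] at h
    rw [h, pow_one, Odd.neg_one_pow (Nat.odd_iff.mpr h)]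

lemma chiZ_inj {a b : ZMod 2} (h : chiZ a = chiZ b) : a = b := by
  fin_cases a <;> fin_cases b <;> revert h <;> norm_num [chiZ, ZMod.val] <;> rfl

lemma chiZ_zero : chiZ 0 = 1 := by simp [chiZ]

lemma dot_add_right (n : ℕ) (w x y : Fin n → ZMod 2) :
    (∑ i, w i * (x + y) i) = (∑ i, w i * x i) + (∑ i, w i * y i) := by
  simp [Pi.add_apply, mul_add, Finset.sum_add_distrib]

lemma orth (n : ℕ) (z : Fin n → ZMod 2) (hz : z ≠ 0) :
    ∑ w : Fin n → ZMod 2, chiZ (∑ i, w i * z i) = 0 := by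
  obtain ⟨i0, hi0⟩ := Function.ne_iff.mp hz
  simp only [Pi.zero_apply] at hi0
  have hall : ∀ a : ZMod 2, a ≠ 0 → a = 1 := by decide
  have hz1 : z i0 = 1 := hall _ hi0
  set δ : Fin n → ZMod 2 := Pi.single i0 1 with hδ
  have hstep : ∀ w : Fin n → ZMod 2,
      chiZ (∑ i, (w + δ) i * z i) = - chiZ (∑ i, w i * z i) := by
    intro w
    have h1 : (∑ i, (w + δ) i * z i) = (∑ i, w i * z i) + (∑ i, δ i * z i) := by
      simp [Pi.add_apply, add_mul, Finset.sum_add_distrib]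
    have h2 : (∑ i, δ i * z i) = 1 := by
      rw [Finset.sum_eq_single i0]
      · simp [hδ, hz1]
      · intro j _ hj; simp [hδ, Pi.single_eq_of_ne hj]
      · simp
    rw [h1, h2, chiZ_add]
    unfold chiZ
    rw [val1]
    ring
  have hsum : ∑ w : Fin n → ZMod 2, chiZ (∑ i, (w + δ) i * z i)
      = ∑ w : Fin n → ZMod 2, chiZ (∑ i, w i * z i) :=
    Fintype.sum_equiv (Equiv.addRight δ) _ _ (fun w => rfl)
  simp only [hstep, Finset.sum_neg_distrib] at hsum
  linarith

lemma sum_chiZ_zero_fun (n : ℕ) :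
    ∑ w : Fin n → ZMod 2, chiZ (∑ i, w i * (0 : Fin n → ZMod 2) i) = 2 ^ n := by
  simp only [Pi.zero_apply, mul_zero, Finset.sum_const_zero, chiZ_zero, Finset.sum_const,
    nsmul_eq_mul, mul_one, Finset.card_univ]
  rw [Fintype.card_fun]
  simp

lemma inversion (n : ℕ) (f : (Fin n → ZMod 2) → ZMod 2) (x : Fin n → ZMod 2) :
    ∑ w : Fin n → ZMod 2, fourierC n f w * chiZ (∑ i, w i * x i) = chiZ (f x) := by
  classical
  have key : ∀ w : Fin n → ZMod 2, fourierC n f w * chiZ (∑ i, w i * x i)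
      = (1 / 2 ^ n : ℝ) * ∑ y, chiZ (f y) * chiZ (∑ i, w i * (y + x) i) := by
    intro w
    unfold fourierC
    rw [mul_assoc, Finset.sum_mul]
    congr 1
    apply Finset.sum_congr rfl
    intro y _
    have : ((-1 : ℝ) ^ (((∑ i, w i * y i) + f y).val)) = chiZ ((∑ i, w i * y i) + f y) := rfl
    rw [this, chiZ_add, dot_add_right, chiZ_add]
    ring
  rw [Finset.sum_congr rfl (fun w _ => key w), ← Finset.mul_sum, Finset.sum_comm]
  have inner : ∀ y : Fin n → ZMod 2,
      (∑ w : Fin n → ZMod 2, chiZ (f y) * chiZ (∑ i, w i * (y + x) i))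
      = chiZ (f y) * ∑ w : Fin n → ZMod 2, chiZ (∑ i, w i * (y + x) i) := by
    intro y; rw [Finset.mul_sum]
  rw [Finset.sum_congr rfl (fun y _ => inner y)]
  rw [Finset.sum_eq_single x]
  · have hxx : x + x = 0 := by
      funext i
      simp only [Pi.add_apply, Pi.zero_apply]
      have h2z : (2 : ZMod 2) = 0 := by decide
      linear_combination x i * h2z
    rw [hxx, sum_chiZ_zero_fun]
    rw [mul_comm (chiZ (f x)) _, ← mul_assoc]
    have : (1 / 2 ^ n : ℝ) * 2 ^ n = 1 := by
      field_simp
    rw [this, one_mul]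
  · intro y _ hy
    have hyx : y + x ≠ 0 := by
      intro h
      apply hy
      have hy2 : y = -x := eq_neg_of_add_eq_zero_left h
      rw [hy2]; funext i; simp only [Pi.neg_apply]; exact (CharTwo.neg_eq (x i))
    rw [orth n _ hyx, mul_zero]
  · simp

theorem bshift_iff_fourier_support (n : ℕ) (f : (Fin n → ZMod 2) → ZMod 2)
    (s : Fin n → ZMod 2) (b : ZMod 2) (hs : s ≠ 0) :
    (∀ x, f (x + s) = f x + b) ↔
      (∀ w : Fin n → ZMod 2, (∑ i, w i * s i) ≠ b → fourierC n f w = 0) := by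
  constructor
  · intro h w hw
    have hall2 : ∀ a c : ZMod 2, a ≠ c → a = c + 1 := by decide
    have hws : (∑ i, w i * s i) = b + 1 := hall2 _ _ hw
    have hsum : ∑ x : Fin n → ZMod 2, chiZ ((∑ i, w i * x i) + f x)
        = ∑ x : Fin n → ZMod 2, chiZ ((∑ i, w i * (x + s) i) + f (x + s)) :=
      (Fintype.sum_equiv (Equiv.addRight s) _ _ (fun x => rfl)).symm
    have hstep : ∀ x : Fin n → ZMod 2,
        chiZ ((∑ i, w i * (x + s) i) + f (x + s)) = - chiZ ((∑ i, w i * x i) + f x) := by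
      intro x
      rw [h x, dot_add_right, hws]
      have h2z : (2 : ZMod 2) = 0 := by decide
      have : (∑ i, w i * x i) + (b + 1) + (f x + b) = ((∑ i, w i * x i) + f x) + 1 := by
        linear_combination b * h2z
      rw [this, chiZ_add]
      unfold chiZ
      rw [val1]
      ring
    simp only [hstep, Finset.sum_neg_distrib] at hsum
    have hz : ∑ x : Fin n → ZMod 2, chiZ ((∑ i, w i * x i) + f x) = 0 := by linarith
    unfold fourierC
    have : ∀ x : Fin n → ZMod 2, ((-1 : ℝ) ^ (((∑ i, w i * x i) + f x).val))
        = chiZ ((∑ i, w i * x i) + f x) := fun x => rfl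
    rw [Finset.sum_congr rfl (fun x _ => this x), hz, mul_zero]
  · intro h x
    apply chiZ_inj
    have h1 := inversion n f (x + s)
    have h2 := inversion n f x
    have key : ∀ w : Fin n → ZMod 2,
        fourierC n f w * chiZ (∑ i, w i * (x + s) i)
        = chiZ b * (fourierC n f w * chiZ (∑ i, w i * x i)) := by
      intro w
      by_cases hw : (∑ i, w i * s i) = b
      · rw [dot_add_right, chiZ_add, hw]; ring
      · rw [h w hw]; ring
    rw [Finset.sum_congr rfl (fun w _ => key w), ← Finset.mul_sum, h2] at h1
    rw [← h1, chiZ_add]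
    ring
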